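/- Fix p ≤ -1 and fix α, r with 0 < α < 1 < r. Then the function q ↦ Θ_{p,q}{α, r} is monotone decreasing on [1, ∞): for all 1 ≤ q₁ ≤ q₂, one has Θ_{p,q₁}{α, r} ≥ Θ_{p,q₂}{α, r}. -/

import Mathlib

open Real Filter

/-- `F_{p,q}(s, α, r) = ( ((1 - s^{2p})/(1 - r^{2p}))(r² + α²)^q
  + ((s^{2p} - r^{2p})/(1 - r^{2p}))(1 + α² r²)^q )^{1/q} - s² - α² r² s⁻²`. -/
noncomputable def Fpq (p q α r s : ℝ) : ℝ :=
  ((1 - s ^ (2 * p)) / (1 - r ^ (2 * p)) * (r ^ 2 + α ^ 2) ^ q +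
    (s ^ (2 * p) - r ^ (2 * p)) / (1 - r ^ (2 * p)) * (1 + α ^ 2 * r ^ 2) ^ q) ^ (1 / q) -
  s ^ 2 - α ^ 2 * r ^ 2 * s ^ (-2 : ℝ)

/-- The period function `Θ_{p,q}{α, r} = ∫_1^r ds / √(F_{p,q}(s, α, r))`. -/
noncomputable def ThetaPQ (p q α r : ℝ) : ℝ :=
  ∫ s in (1 : ℝ)..r, (Real.sqrt (Fpq p q α r s))⁻¹

open MeasureTheory Set


lemma convexOn_rpow_nonpos {c : ℝ} (hc : c ≤ 0) :
    ConvexOn ℝ (Set.Ioi (0:ℝ)) fun x : ℝ => x ^ c := by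
  have hderiv : ∀ x ∈ Set.Ioi (0:ℝ), HasDerivAt (fun y : ℝ => y ^ c) (c * x ^ (c - 1)) x :=
    fun x hx => Real.hasDerivAt_rpow_const (Or.inl (ne_of_gt hx))
  have hd1 : ∀ x ∈ Set.Ioi (0:ℝ), deriv (fun y : ℝ => y ^ c) x = c * x ^ (c - 1) :=
    fun x hx => (hderiv x hx).deriv
  have hderiv2 : ∀ x ∈ Set.Ioi (0:ℝ),
      HasDerivAt (deriv fun y : ℝ => y ^ c) (c * ((c - 1) * x ^ (c - 2))) x := by
    intro x hx
    have hev : (fun y : ℝ => c * y ^ (c - 1)) =ᶠ[nhds x] deriv (fun y : ℝ => y ^ c) := by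
      filter_upwards [isOpen_Ioi.mem_nhds hx] with y hy using (hd1 y hy).symm
    have h2 : HasDerivAt (fun y : ℝ => c * y ^ (c - 1)) (c * ((c - 1) * x ^ (c - 1 - 1))) x :=
      (Real.hasDerivAt_rpow_const (p := c - 1) (Or.inl (ne_of_gt hx))).const_mul c
    have h2' : HasDerivAt (fun y : ℝ => c * y ^ (c - 1)) (c * ((c - 1) * x ^ (c - 2))) x := by
      convert h2 using 2; ring_nf
    exact h2'.congr_of_eventuallyEq hev.symm
  apply convexOn_of_deriv2_nonneg (convex_Ioi 0)
  · exact fun x hx => ((hderiv x hx).continuousAt.continuousWithinAt)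
  · rw [interior_Ioi]
    exact fun x hx => (hderiv x hx).differentiableAt.differentiableWithinAt
  · rw [interior_Ioi]
    exact fun x hx => (hderiv2 x hx).differentiableAt.differentiableWithinAt
  · rw [interior_Ioi]
    intro x hx
    have : deriv^[2] (fun y : ℝ => y ^ c) x = c * ((c - 1) * x ^ (c - 2)) := by
      simp only [Function.iterate_succ, Function.iterate_zero, Function.comp_apply, id_eq,
        Function.comp]
      exact (hderiv2 x hx).deriv
    rw [this]
    have h1 : 0 ≤ c * (c - 1) := by nlinarith
    have h2 : (0:ℝ) ≤ x ^ (c - 2) := Real.rpow_nonneg (le_of_lt hx) _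
    nlinarith

lemma chord_rpow {c r s : ℝ} (hc : c ≤ 0) (hr : 1 < r) (hs1 : 1 ≤ s) (hsr : s ≤ r) :
    s ^ c ≤ (r - s) / (r - 1) + (s - 1) / (r - 1) * r ^ c := by
  have h01 : (0:ℝ) < r - 1 := by linarith
  have hmem1 : (1:ℝ) ∈ Set.Ioi (0:ℝ) := by norm_num
  have hmemr : r ∈ Set.Ioi (0:ℝ) := by simp; linarith
  have key := (convexOn_rpow_nonpos hc).2 hmem1 hmemr
    (div_nonneg (by linarith : (0:ℝ) ≤ r - s) h01.le)
    (div_nonneg (by linarith : (0:ℝ) ≤ s - 1) h01.le)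
    (by field_simp; ring)
  have hx : (r - s) / (r - 1) * 1 + (s - 1) / (r - 1) * r = s := by field_simp; ring
  simp only [smul_eq_mul] at key
  rw [hx, Real.one_rpow, mul_one] at key
  exact key


lemma powmean2 {w₁ w₂ A B q₁ q₂ : ℝ} (hw₁ : 0 ≤ w₁) (hw₂ : 0 ≤ w₂) (hw : w₁ + w₂ = 1)
    (hA : 0 ≤ A) (hB : 0 ≤ B) (hq₁ : 0 < q₁) (h₁₂ : q₁ ≤ q₂) :
    (w₁ * A ^ q₁ + w₂ * B ^ q₁) ^ (1/q₁) ≤ (w₁ * A ^ q₂ + w₂ * B ^ q₂) ^ (1/q₂) := by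
  have hq₂ : 0 < q₂ := hq₁.trans_le h₁₂
  have ht : 1 ≤ q₂ / q₁ := (one_le_div hq₁).2 h₁₂
  have key := Real.arith_mean_le_rpow_mean (Finset.univ : Finset (Fin 2)) ![w₁, w₂]
      ![A ^ q₁, B ^ q₁] (fun i _ => by fin_cases i <;> simpa)
      (by simp [Fin.sum_univ_two, hw])
      (fun i _ => by fin_cases i <;> simp <;> positivity) ht
  simp only [Fin.sum_univ_two, Matrix.cons_val_zero, Matrix.cons_val_one, Matrix.head_cons] at key
  have hA2 : (A ^ q₁) ^ (q₂/q₁) = A ^ q₂ := by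
    rw [← Real.rpow_mul hA]; congr 1; field_simp
  have hB2 : (B ^ q₁) ^ (q₂/q₁) = B ^ q₂ := by
    rw [← Real.rpow_mul hB]; congr 1; field_simp
  rw [hA2, hB2] at key
  have h1 : 0 ≤ w₁ * A ^ q₁ + w₂ * B ^ q₁ := by positivity
  have h3 : 0 ≤ w₁ * A ^ q₂ + w₂ * B ^ q₂ := by positivity
  calc (w₁ * A ^ q₁ + w₂ * B ^ q₁) ^ (1/q₁)
      ≤ ((w₁ * A ^ q₂ + w₂ * B ^ q₂) ^ (1/(q₂/q₁))) ^ (1/q₁) :=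
        Real.rpow_le_rpow h1 key (by positivity)
    _ = (w₁ * A ^ q₂ + w₂ * B ^ q₂) ^ (1/q₂) := by
        rw [← Real.rpow_mul h3]; congr 1; field_simp

lemma Fpq_mono {p α r s q₁ q₂ : ℝ} (hp : p ≤ -1) (hα₀ : 0 < α) (hr : 1 < r)
    (hs1 : 1 ≤ s) (hsr : s ≤ r) (hq₁ : 0 < q₁) (h₁₂ : q₁ ≤ q₂) :
    Fpq p q₁ α r s ≤ Fpq p q₂ α r s := by
  have h2p : (2*p) ≤ 0 := by linarith
  have hs0 : (0:ℝ) < s := by linarith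
  have hrp : r ^ (2*p) < 1 := Real.rpow_lt_one_of_one_lt_of_neg hr (by linarith)
  have hsp1 : s ^ (2*p) ≤ 1 := Real.rpow_le_one_of_one_le_of_nonpos hs1 h2p
  have hrs : r ^ (2*p) ≤ s ^ (2*p) := Real.rpow_le_rpow_of_nonpos hs0 hsr h2p
  have hd : (0:ℝ) < 1 - r ^ (2*p) := by linarith
  unfold Fpq
  apply sub_le_sub_right
  apply sub_le_sub_right
  exact powmean2 (div_nonneg (by linarith) hd.le) (div_nonneg (by linarith) hd.le)
    (by field_simp; ring) (by positivity) (by positivity) hq₁ h₁₂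

set_option maxHeartbeats 1000000 in
lemma Fpq_lb {p α r s : ℝ} (hp : p ≤ -1) (hα₀ : 0 < α) (hα₁ : α < 1) (hr : 1 < r)
    (hs1 : 1 ≤ s) (hsr : s ≤ r) {q : ℝ} (hq : 1 ≤ q) :
    (s - 1) * (r - s) / r ^ 2 ≤ Fpq p q α r s := by
  refine le_trans ?_ (Fpq_mono hp hα₀ hr hs1 hsr one_pos hq)
  have h2p : (2*p) ≤ 0 := by linarith
  have hs0 : (0:ℝ) < s := by linarith
  have hr0 : (0:ℝ) < r := by linarith
  have hr1 : (0:ℝ) < r - 1 := by linarith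
  have hrp : r ^ (2*p) < 1 := Real.rpow_lt_one_of_one_lt_of_neg hr (by linarith)
  have hd : (0:ℝ) < 1 - r ^ (2*p) := by linarith
  have hch := chord_rpow (c := 2*p) h2p hr hs1 hsr
  have hch' : s ^ (2*p) * (r-1) ≤ (r - s) + (s-1) * r ^ (2*p) := by
    have h := mul_le_mul_of_nonneg_right hch hr1.le
    calc s ^ (2*p) * (r-1) ≤ ((r-s)/(r-1) + (s-1)/(r-1) * r ^ (2*p))*(r-1) := h
      _ = (r-s) + (s-1) * r ^ (2*p) := by field_simp
  -- w₁ lower bound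
  have hw1 : (s - 1)/(r - 1) ≤ (1 - s ^ (2*p)) / (1 - r ^ (2*p)) := by
    rw [div_le_div_iff₀ hr1 hd]
    nlinarith [hch']
  -- rewrite Fpq p 1
  have hs2 : s ^ (-2:ℝ) = (s^2)⁻¹ := by
    rw [show (-2:ℝ) = -((2:ℕ):ℝ) by norm_num, Real.rpow_neg hs0.le, Real.rpow_natCast]
  have hF1 : Fpq p 1 α r s = (1 - s ^ (2*p)) / (1 - r ^ (2*p)) * (r^2 + α^2)
      + (1 - (1 - s ^ (2*p)) / (1 - r ^ (2*p))) * (1 + α^2 * r^2) - s^2 - α^2*r^2*(s^2)⁻¹ := by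
    unfold Fpq
    rw [show (1/(1:ℝ)) = 1 by norm_num, Real.rpow_one, Real.rpow_one, Real.rpow_one, hs2]
    have : (s ^ (2*p) - r ^ (2*p)) / (1 - r ^ (2*p)) = 1 - (1 - s ^ (2*p)) / (1 - r ^ (2*p)) := by
      field_simp; ring
    rw [this]
  rw [hF1]
  set w : ℝ := (1 - s ^ (2*p)) / (1 - r ^ (2*p)) with hwdef
  have hr2 : (0:ℝ) ≤ r^2 - 1 := by nlinarith
  have ha2 : (0:ℝ) ≤ 1 - α^2 := by nlinarith
  have hAB : (0:ℝ) ≤ (r^2 + α^2) - (1 + α^2*r^2) := by nlinarith [mul_nonneg hr2 ha2]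
  have hstep : (s-1)/(r-1) * ((r^2 + α^2) - (1 + α^2*r^2)) ≤ w * ((r^2 + α^2) - (1 + α^2*r^2)) :=
    mul_le_mul_of_nonneg_right hw1 hAB
  have hIdent : (s-1)/(r-1) * ((r^2 + α^2) - (1 + α^2*r^2)) = (s-1)*((r+1)*(1-α^2)) := by
    field_simp; ring
  have hnn : (0:ℝ) ≤ (s-1)*(r-s) := mul_nonneg (by linarith) (by linarith)
  have hK : 1 ≤ s^2 + α^2*(r+1)*s + α^2*r := by
    nlinarith [mul_nonneg (sub_nonneg.2 hs1) (show (0:ℝ) ≤ s + 1 by linarith),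
      mul_pos hα₀ hα₀, mul_pos (mul_pos hα₀ hα₀) hs0]
  have key : (s-1)*(r-s)/r^2 ≤ (s-1)*(r-s)*(s^2 + α^2*(r+1)*s + α^2*r)/s^2 := by
    apply div_le_div₀ (mul_nonneg hnn (by positivity))
      (le_mul_of_one_le_right hnn hK) (by positivity) (by nlinarith)
  have hEq : (s-1)*(r-s)*(s^2 + α^2*(r+1)*s + α^2*r)/s^2
      = 1 + α^2*r^2 + (s-1)*((r+1)*(1-α^2)) - s^2 - α^2*r^2*(s^2)⁻¹ := by
    field_simp; ring
  calc (s-1)*(r-s)/r^2 ≤ (s-1)*(r-s)*(s^2 + α^2*(r+1)*s + α^2*r)/s^2 := key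
    _ = 1 + α^2*r^2 + (s-1)*((r+1)*(1-α^2)) - s^2 - α^2*r^2*(s^2)⁻¹ := hEq
    _ ≤ w * (r^2 + α^2) + (1 - w) * (1 + α^2*r^2) - s^2 - α^2*r^2*(s^2)⁻¹ := by
        rw [hIdent] at hstep; nlinarith [hstep]

lemma inv_sqrt_eq {x : ℝ} (hx : 0 < x) : (Real.sqrt x)⁻¹ = x ^ (-(1/2) : ℝ) := by
  rw [Real.sqrt_eq_rpow, ← Real.rpow_neg hx.le]

lemma measurable_f (p q α r : ℝ) :
    Measurable fun s : ℝ => (Real.sqrt (Fpq p q α r s))⁻¹ := by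
  unfold Fpq
  apply Measurable.inv
  apply Measurable.sqrt
  fun_prop

lemma bound_ptwise {p α r q : ℝ} (hp : p ≤ -1) (hα₀ : 0 < α) (hα₁ : α < 1) (hr : 1 < r)
    (hq : 1 ≤ q) {s : ℝ} (hs : s ∈ Set.Ioo 1 r) :
    (Real.sqrt (Fpq p q α r s))⁻¹
      ≤ r * (Real.sqrt ((r-1)/2))⁻¹ * ((s-1) ^ (-(1/2) : ℝ) + (r-s) ^ (-(1/2) : ℝ)) := by
  obtain ⟨hs1, hsr⟩ := hs
  have h1 : (0:ℝ) < s - 1 := by linarith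
  have h2 : (0:ℝ) < r - s := by linarith
  have hr0 : (0:ℝ) < r := by linarith
  have hFpos : (0:ℝ) < (s-1)*(r-s)/r^2 := by positivity
  have hF := Fpq_lb hp hα₀ hα₁ hr hs1.le hsr.le hq
  have step1 : (Real.sqrt (Fpq p q α r s))⁻¹ ≤ (Real.sqrt ((s-1)*(r-s)/r^2))⁻¹ :=
    inv_anti₀ (Real.sqrt_pos.2 hFpos) (Real.sqrt_le_sqrt hF)
  set a := Real.sqrt (s-1) with ha
  set b := Real.sqrt (r-s) with hb
  have ha0 : 0 < a := Real.sqrt_pos.2 h1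
  have hb0 : 0 < b := Real.sqrt_pos.2 h2
  have hsqrt : Real.sqrt ((s-1)*(r-s)/r^2) = a * b / r := by
    rw [Real.sqrt_div (by positivity), Real.sqrt_mul h1.le, Real.sqrt_sq hr0.le]
  rw [hsqrt] at step1
  have hinv : (a * b / r)⁻¹ = r * (a⁻¹ * b⁻¹) := by
    rw [inv_div]; field_simp
  rw [hinv] at step1
  rw [← inv_sqrt_eq h1, ← inv_sqrt_eq h2, ← ha, ← hb]
  have hC0 : 0 < Real.sqrt ((r-1)/2) := Real.sqrt_pos.2 (by linarith)
  set C := (Real.sqrt ((r-1)/2))⁻¹ with hCdef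
  have hC0' : 0 < C := by positivity
  refine step1.trans ?_
  rcases le_or_gt (s-1) ((r-1)/2) with hcase | hcase
  · have hbge : Real.sqrt ((r-1)/2) ≤ b := Real.sqrt_le_sqrt (by linarith)
    have hbinv : b⁻¹ ≤ C := inv_anti₀ hC0 hbge
    have : a⁻¹ * b⁻¹ ≤ C * (a⁻¹ + b⁻¹) := by
      have h' : a⁻¹ * b⁻¹ ≤ a⁻¹ * C := by
        exact mul_le_mul_of_nonneg_left hbinv (by positivity)
      have h'' : a⁻¹ * C ≤ C * (a⁻¹ + b⁻¹) := by
        have : 0 ≤ C * b⁻¹ := by positivity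
        nlinarith
      linarith
    calc r * (a⁻¹ * b⁻¹) ≤ r * (C * (a⁻¹ + b⁻¹)) :=
          mul_le_mul_of_nonneg_left this hr0.le
      _ = r * C * (a⁻¹ + b⁻¹) := by ring
  · have hage : Real.sqrt ((r-1)/2) ≤ a := Real.sqrt_le_sqrt (by linarith)
    have hainv : a⁻¹ ≤ C := inv_anti₀ hC0 hage
    have : a⁻¹ * b⁻¹ ≤ C * (a⁻¹ + b⁻¹) := by
      have h' : a⁻¹ * b⁻¹ ≤ C * b⁻¹ := by
        exact mul_le_mul_of_nonneg_right hainv (by positivity)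
      have h'' : C * b⁻¹ ≤ C * (a⁻¹ + b⁻¹) := by
        have : 0 ≤ C * a⁻¹ := by positivity
        nlinarith
      linarith
    calc r * (a⁻¹ * b⁻¹) ≤ r * (C * (a⁻¹ + b⁻¹)) :=
          mul_le_mul_of_nonneg_left this hr0.le
      _ = r * C * (a⁻¹ + b⁻¹) := by ring

lemma integrableMain {p α r q : ℝ} (hp : p ≤ -1) (hα₀ : 0 < α) (hα₁ : α < 1) (hr : 1 < r)
    (hq : 1 ≤ q) :
    IntervalIntegrable (fun s : ℝ => (Real.sqrt (Fpq p q α r s))⁻¹) volume 1 r := by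
  have hr0 : (0:ℝ) < r := by linarith
  set C : ℝ := r * (Real.sqrt ((r-1)/2))⁻¹ with hC
  have hC0 : 0 ≤ C := by positivity
  set G : ℝ → ℝ := fun s => C * ((s-1) ^ (-(1/2) : ℝ) + (r-s) ^ (-(1/2) : ℝ)) with hG
  have h1 : IntervalIntegrable (fun s : ℝ => (s-1) ^ (-(1/2):ℝ)) volume 1 r := by
    have h := (intervalIntegral.intervalIntegrable_rpow' (a := 0) (b := r-1)
      (show (-1:ℝ) < -(1/2) by norm_num)).comp_sub_right 1
    norm_num at h
    exact h
  have h2 : IntervalIntegrable (fun s : ℝ => (r-s) ^ (-(1/2):ℝ)) volume 1 r := by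
    have h := (intervalIntegral.intervalIntegrable_rpow' (a := 0) (b := r-1)
      (show (-1:ℝ) < -(1/2) by norm_num)).comp_sub_left r
    norm_num [sub_sub_cancel] at h
    exact h.symm
  have hGint : IntervalIntegrable G volume 1 r := ((h1.add h2).const_mul C)
  rw [intervalIntegrable_iff_integrableOn_Ioc_of_le hr.le] at hGint ⊢
  apply MeasureTheory.Integrable.mono hGint ((measurable_f p q α r).aestronglyMeasurable.restrict)
  have hne : ∀ᵐ s : ℝ ∂(volume.restrict (Set.Ioc 1 r)), s ≠ r := by
    apply ae_restrict_of_ae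
    rw [ae_iff]
    simp only [ne_eq, not_not, Set.setOf_eq_eq_singleton]
    exact Real.volume_singleton
  filter_upwards [hne, ae_restrict_mem measurableSet_Ioc] with s hsne hsmem
  have hsIoo : s ∈ Set.Ioo 1 r := ⟨hsmem.1, lt_of_le_of_ne hsmem.2 hsne⟩
  have hb := bound_ptwise hp hα₀ hα₁ hr hq hsIoo
  have hfnn : 0 ≤ (Real.sqrt (Fpq p q α r s))⁻¹ := by positivity
  rw [Real.norm_eq_abs, abs_of_nonneg hfnn]
  refine hb.trans ?_
  rw [Real.norm_eq_abs, ← hC]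
  exact le_abs_self _

theorem stmt_18 (p α r : ℝ) (hp : p ≤ -1) (hα₀ : 0 < α) (hα₁ : α < 1) (hr : 1 < r)
    (q₁ q₂ : ℝ) (hq₁ : 1 ≤ q₁) (h₁₂ : q₁ ≤ q₂) :
    ThetaPQ p q₂ α r ≤ ThetaPQ p q₁ α r := by
  unfold ThetaPQ
  have hint₁ := integrableMain hp hα₀ hα₁ hr hq₁
  have hint₂ := integrableMain hp hα₀ hα₁ hr (hq₁.trans h₁₂)
  apply intervalIntegral.integral_mono_ae_restrict hr.le hint₂ hint₁
  have hne1 : ∀ᵐ s : ℝ ∂(volume.restrict (Set.Icc 1 r)), s ≠ 1 := by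
    apply ae_restrict_of_ae
    rw [ae_iff]
    simp only [ne_eq, not_not, Set.setOf_eq_eq_singleton]
    exact Real.volume_singleton
  have hner : ∀ᵐ s : ℝ ∂(volume.restrict (Set.Icc 1 r)), s ≠ r := by
    apply ae_restrict_of_ae
    rw [ae_iff]
    simp only [ne_eq, not_not, Set.setOf_eq_eq_singleton]
    exact Real.volume_singleton
  filter_upwards [hne1, hner, ae_restrict_mem measurableSet_Icc] with s h1 h2 hmem
  have hs1 : 1 < s := lt_of_le_of_ne hmem.1 (Ne.symm h1)
  have hsr : s < r := lt_of_le_of_ne hmem.2 h2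
  have hFpos : 0 < Fpq p q₁ α r s := by
    refine lt_of_lt_of_le ?_ (Fpq_lb hp hα₀ hα₁ hr hs1.le hsr.le hq₁)
    have : (0:ℝ) < r := by linarith
    have h1' : (0:ℝ) < s - 1 := by linarith
    have h2' : (0:ℝ) < r - s := by linarith
    positivity
  have hmono := Fpq_mono hp hα₀ hr hs1.le hsr.le (by linarith : (0:ℝ) < q₁) h₁₂
  exact inv_anti₀ (Real.sqrt_pos.2 hFpos) (Real.sqrt_le_sqrt hmono)
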